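/- There exists a universal constant C such that the following holds. Let E ⊂ ℝ² be a finite set, x ∈ ℝ², and k ≥ 0 an integer. Then there exist subsets S₁, …, S₁₂ ⊂ E with #S_i ≤ k for each i, such that ⋂_{i=1}^{12} σ(x, S_i) ⊂ C·σ^♯(x, k), where C·σ^♯(x, k) = {C·P : P ∈ σ^♯(x, k)}. -/

import Mathlib

set_option maxHeartbeats 1000000


noncomputable section

/-- The plane `ℝ²` with the Euclidean metric. -/
abbrev V2 : Type := EuclideanSpace ℝ (Fin 2)

/-- Partial derivative of `F : ℝ² → ℝ` in the `i`-th coordinate direction. -/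
noncomputable def pd (i : Fin 2) (F : V2 → ℝ) : V2 → ℝ :=
  fun x => fderiv ℝ F x (EuclideanSpace.single i 1)

/-- `Σ_{|α| ≤ 2} |∂^α F(x)|²`, the sum over all multi-indices `α` of order at most `2`. -/
noncomputable def c2SqAt (F : V2 → ℝ) (x : V2) : ℝ :=
  (F x) ^ 2 + (pd 0 F x) ^ 2 + (pd 1 F x) ^ 2 +
    (pd 0 (pd 0 F) x) ^ 2 + (pd 0 (pd 1 F) x) ^ 2 + (pd 1 (pd 1 F) x) ^ 2

/-- `‖F‖_{C²(ℝ²)} := sup_x (Σ_{|α|≤2} |∂^α F(x)|²)^{1/2} ≤ M`. -/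
def C2NormLE (F : V2 → ℝ) (M : ℝ) : Prop :=
  ∀ x : V2, Real.sqrt (c2SqAt F x) ≤ M

/-- The 1-jet of `F` at `x`: `𝒥_x F (y) = F(x) + ∇F(x) · (y − x)`. -/
noncomputable def jet (x : V2) (F : V2 → ℝ) : V2 → ℝ :=
  fun y => F x + fderiv ℝ F x (y - x)

/-- `Γ₊(x, S, M)`: the 1-jets at `x` of nonnegative `C²` functions `F` with
`‖F‖_{C²(ℝ²)} ≤ M` and `F = f` on `S`. -/
def GammaPlus (f : V2 → ℝ) (x : V2) (S : Finset V2) (M : ℝ) : Set (V2 → ℝ) :=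
  {P | ∃ F : V2 → ℝ, ContDiff ℝ 2 F ∧ (∀ y : V2, 0 ≤ F y) ∧ C2NormLE F M ∧
        (∀ y ∈ S, F y = f y) ∧ jet x F = P}

/-- `σ(x, S)`: the 1-jets at `x` of `C²` functions `F` with `‖F‖_{C²(ℝ²)} ≤ 1` and
`F = 0` on `S`. -/
def sigmaSet (x : V2) (S : Finset V2) : Set (V2 → ℝ) :=
  {P | ∃ F : V2 → ℝ, ContDiff ℝ 2 F ∧ (∀ y ∈ S, F y = 0) ∧ C2NormLE F 1 ∧
        jet x F = P}

/-- `Γ₊^♯(x, k, M) := ⋂_{S ⊆ E, #S ≤ k} Γ₊(x, S, M)`. -/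
def GammaPlusSharp (E : Finset V2) (f : V2 → ℝ) (x : V2) (k : ℕ) (M : ℝ) :
    Set (V2 → ℝ) :=
  {P | ∀ S : Finset V2, S ⊆ E → S.card ≤ k → P ∈ GammaPlus f x S M}

/-- `σ^♯(x, k) := ⋂_{S ⊆ E, #S ≤ k} σ(x, S)`. -/
def sigmaSharp (E : Finset V2) (x : V2) (k : ℕ) : Set (V2 → ℝ) :=
  {P | ∀ S : Finset V2, S ⊆ E → S.card ≤ k → P ∈ sigmaSet x S}


abbrev E3 : Type := EuclideanSpace ℝ (Fin 3)
open RealInnerProductSpace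

lemma pd_contDiff {F : V2 → ℝ} (hF : ContDiff ℝ 2 F) (i : Fin 2) :
    ContDiff ℝ 1 (pd i F) := by
  have h1 : ContDiff ℝ 1 (fderiv ℝ F) := hF.fderiv_right (by norm_num)
  have h2 : ContDiff ℝ 1 (fun L : V2 →L[ℝ] ℝ => L (EuclideanSpace.single i 1)) :=
    (ContinuousLinearMap.apply ℝ ℝ (EuclideanSpace.single i (1:ℝ))).contDiff
  exact h2.comp h1

lemma pd_diff {F : V2 → ℝ} (hF : ContDiff ℝ 2 F) (i : Fin 2) :
    Differentiable ℝ (pd i F) := (pd_contDiff hF i).differentiable (by norm_num)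

lemma fderiv_combo {F G H : V2 → ℝ} (hF : Differentiable ℝ F) (hG : Differentiable ℝ G)
    (hH : Differentiable ℝ H) (a b c : ℝ) (z : V2) :
    fderiv ℝ (fun y => a * F y + b * G y + c * H y) z
      = a • fderiv ℝ F z + b • fderiv ℝ G z + c • fderiv ℝ H z := by
  rw [fderiv_fun_add (f := fun y => a * F y + b * G y) (g := fun y => c * H y) (((hF z).const_mul a).add ((hG z).const_mul b)) ((hH z).const_mul c)]
  rw [fderiv_fun_add ((hF z).const_mul a) ((hG z).const_mul b)]
  rw [fderiv_const_mul (hF z) a, fderiv_const_mul (hG z) b, fderiv_const_mul (hH z) c]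

lemma pd_combo {F G H : V2 → ℝ} (hF : Differentiable ℝ F) (hG : Differentiable ℝ G)
    (hH : Differentiable ℝ H) (a b c : ℝ) (i : Fin 2) :
    pd i (fun y => a * F y + b * G y + c * H y)
      = fun y => a * pd i F y + b * pd i G y + c * pd i H y := by
  funext z
  simp only [pd, fderiv_combo hF hG hH a b c z]
  simp [smul_eq_mul]

lemma combo_contDiff {F G H : V2 → ℝ} (hF : ContDiff ℝ 2 F) (hG : ContDiff ℝ 2 G)
    (hH : ContDiff ℝ 2 H) (a b c : ℝ) :
    ContDiff ℝ 2 (fun y => a * F y + b * G y + c * H y) :=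
  ((contDiff_const.mul hF).add (contDiff_const.mul hG)).add (contDiff_const.mul hH)

lemma vec6_three {α : Type*} (a b c d e f : α) : (![a,b,c,d,e,f] : Fin 6 → α) 3 = d := rfl
lemma vec6_four {α : Type*} (a b c d e f : α) : (![a,b,c,d,e,f] : Fin 6 → α) 4 = e := rfl
lemma vec6_five {α : Type*} (a b c d e f : α) : (![a,b,c,d,e,f] : Fin 6 → α) 5 = f := rfl

noncomputable def D6 (F : V2 → ℝ) (z : V2) : EuclideanSpace ℝ (Fin 6) :=
  (WithLp.equiv 2 (Fin 6 → ℝ)).symm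
    ![F z, pd 0 F z, pd 1 F z, pd 0 (pd 0 F) z, pd 0 (pd 1 F) z, pd 1 (pd 1 F) z]

lemma sqrt_c2SqAt (F : V2 → ℝ) (z : V2) : Real.sqrt (c2SqAt F z) = ‖D6 F z‖ := by
  rw [EuclideanSpace.norm_eq]
  congr 1
  simp [D6, Fin.sum_univ_six, c2SqAt, Real.norm_eq_abs, sq_abs, vec6_three, vec6_four, vec6_five]


lemma D6_combo {F G H : V2 → ℝ} (hF : ContDiff ℝ 2 F) (hG : ContDiff ℝ 2 G)
    (hH : ContDiff ℝ 2 H) (a b c : ℝ) (z : V2) :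
    D6 (fun y => a * F y + b * G y + c * H y) z = a • D6 F z + b • D6 G z + c • D6 H z := by
  have dF := (hF.differentiable (by norm_num))
  have dG := (hG.differentiable (by norm_num))
  have dH := (hH.differentiable (by norm_num))
  have h1 : ∀ j : Fin 2, pd j (fun y => a * F y + b * G y + c * H y)
      = fun y => a * pd j F y + b * pd j G y + c * pd j H y := fun j => pd_combo dF dG dH a b c j
  have h2 : ∀ i j : Fin 2, pd i (pd j (fun y => a * F y + b * G y + c * H y))
      = fun y => a * pd i (pd j F) y + b * pd i (pd j G) y + c * pd i (pd j H) y := by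
    intro i j
    rw [h1 j]
    exact pd_combo (pd_diff hF j) (pd_diff hG j) (pd_diff hH j) a b c i
  ext i
  fin_cases i <;>
    simp [D6, h1, pd_combo (pd_diff hF 0) (pd_diff hG 0) (pd_diff hH 0) a b c,
      pd_combo (pd_diff hF 1) (pd_diff hG 1) (pd_diff hH 1) a b c,
      WithLp.equiv_symm_apply, PiLp.toLp_apply, smul_eq_mul, vec6_three, vec6_four, vec6_five]

lemma sigma_combo {x : V2} {S : Finset V2} {P₁ P₂ P₃ : V2 → ℝ}
    (h₁ : P₁ ∈ sigmaSet x S) (h₂ : P₂ ∈ sigmaSet x S) (h₃ : P₃ ∈ sigmaSet x S)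
    {a b c : ℝ} (h : |a| + |b| + |c| ≤ 1) :
    (fun y => a * P₁ y + b * P₂ y + c * P₃ y) ∈ sigmaSet x S := by
  obtain ⟨F, hF2, hFS, hFn, hFj⟩ := h₁
  obtain ⟨G, hG2, hGS, hGn, hGj⟩ := h₂
  obtain ⟨H, hH2, hHS, hHn, hHj⟩ := h₃
  refine ⟨fun y => a * F y + b * G y + c * H y, combo_contDiff hF2 hG2 hH2 a b c, ?_, ?_, ?_⟩
  · intro y hy
    show a * F y + b * G y + c * H y = 0
    rw [hFS y hy, hGS y hy, hHS y hy]; ring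
  · intro z
    rw [sqrt_c2SqAt, D6_combo hF2 hG2 hH2 a b c z]
    calc ‖a • D6 F z + b • D6 G z + c • D6 H z‖
        ≤ ‖a • D6 F z‖ + ‖b • D6 G z‖ + ‖c • D6 H z‖ := norm_add₃_le
      _ = |a| * ‖D6 F z‖ + |b| * ‖D6 G z‖ + |c| * ‖D6 H z‖ := by
          simp [norm_smul, Real.norm_eq_abs]
      _ ≤ |a| * 1 + |b| * 1 + |c| * 1 := by
          gcongr <;> first
            | exact (sqrt_c2SqAt F z) ▸ hFn z
            | exact (sqrt_c2SqAt G z) ▸ hGn z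
            | exact (sqrt_c2SqAt H z) ▸ hHn z
      _ ≤ 1 := by linarith [h]
  · funext y
    have dF := (hF2.differentiable (by norm_num)) x
    have dG := (hG2.differentiable (by norm_num)) x
    have dH := (hH2.differentiable (by norm_num)) x
    show (fun y => a * F y + b * G y + c * H y) x
        + fderiv ℝ (fun y => a * F y + b * G y + c * H y) x (y - x) = _
    rw [fderiv_combo (hF2.differentiable (by norm_num)) (hG2.differentiable (by norm_num))
      (hH2.differentiable (by norm_num)) a b c x]
    rw [← hFj, ← hGj, ← hHj]
    simp only [jet, ContinuousLinearMap.add_apply, ContinuousLinearMap.coe_smul',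
      Pi.smul_apply, smul_eq_mul]
    ring

lemma exists_unit_orth (v₁ v₂ : E3) :
    ∃ u : E3, ‖u‖ = 1 ∧ ⟪v₁, u⟫ = 0 ∧ ⟪v₂, u⟫ = 0 := by
  set W : Submodule ℝ E3 := (ℝ ∙ v₁) ⊔ (ℝ ∙ v₂) with hWdef
  have h1 : Module.finrank ℝ (ℝ ∙ v₁) ≤ 1 := by
    rcases eq_or_ne v₁ 0 with h | h
    · rw [h, Submodule.span_zero_singleton]
      simp
    · rw [finrank_span_singleton h]
  have h2 : Module.finrank ℝ (ℝ ∙ v₂) ≤ 1 := by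
    rcases eq_or_ne v₂ 0 with h | h
    · rw [h, Submodule.span_zero_singleton]
      simp
    · rw [finrank_span_singleton h]
  have hsum := Submodule.finrank_sup_add_finrank_inf_eq (ℝ ∙ v₁) (ℝ ∙ v₂)
  rw [← hWdef] at hsum
  have hW : Module.finrank ℝ W ≤ 2 := by omega
  have horthrank := W.finrank_add_finrank_orthogonal
  have hE3 : Module.finrank ℝ E3 = 3 := finrank_euclideanSpace_fin
  rw [hE3] at horthrank
  have hpos : 0 < Module.finrank ℝ Wᗮ := by omega
  have hne : Wᗮ ≠ ⊥ := by
    intro h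
    rw [h, finrank_bot] at hpos
    exact lt_irrefl 0 hpos
  obtain ⟨u₀, hu₀W, hu₀⟩ := (Submodule.ne_bot_iff _).mp hne
  have hv₁W : v₁ ∈ W := le_sup_left (α := Submodule ℝ E3) (Submodule.mem_span_singleton_self v₁)
  have hv₂W : v₂ ∈ W := le_sup_right (α := Submodule ℝ E3) (Submodule.mem_span_singleton_self v₂)
  have ho := (Submodule.mem_orthogonal W u₀).mp hu₀W
  refine ⟨‖u₀‖⁻¹ • u₀, ?_, ?_, ?_⟩
  · rw [norm_smul, norm_inv, norm_norm, inv_mul_cancel₀ (norm_ne_zero_iff.mpr hu₀)]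
  · rw [real_inner_smul_right, ho v₁ hv₁W, mul_zero]
  · rw [real_inner_smul_right, ho v₂ hv₂W, mul_zero]

/-- projection onto the orthogonal complement of `v₁, v₂` (assumed orthonormal-or-zero). -/
def prj (v₁ v₂ p : E3) : E3 := p - ⟪v₁, p⟫ • v₁ - ⟪v₂, p⟫ • v₂

lemma prj_zero_zero (p : E3) : prj 0 0 p = p := by simp [prj]

lemma inner_prj_self {v₁ v₂ : E3} (hv₁ : ‖v₁‖ = 1 ∨ v₁ = 0) (hv₂ : ‖v₂‖ = 1 ∨ v₂ = 0)
    (hv₁₂ : ⟪v₁, v₂⟫ = 0) (p : E3) :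
    ⟪v₁, prj v₁ v₂ p⟫ = 0 ∧ ⟪v₂, prj v₁ v₂ p⟫ = 0 := by
  have hc : ⟪v₂, v₁⟫ = (0:ℝ) := by rw [real_inner_comm]; exact hv₁₂
  constructor
  · rcases hv₁ with h | h
    · simp only [prj, inner_sub_right, real_inner_smul_right, hv₁₂]
      rw [real_inner_self_eq_norm_sq, h]
      ring
    · simp [h]
  · rcases hv₂ with h | h
    · simp only [prj, inner_sub_right, real_inner_smul_right, hc]
      rw [real_inner_self_eq_norm_sq, h]
      ring
    · simp [h]

lemma inner_eq_inner_prj {v₁ v₂ u : E3} (hu₁ : ⟪v₁, u⟫ = 0) (hu₂ : ⟪v₂, u⟫ = 0) (p : E3) :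
    ⟪u, p⟫ = ⟪u, prj v₁ v₂ p⟫ := by
  have h1 : ⟪u, v₁⟫ = (0:ℝ) := by rw [real_inner_comm]; exact hu₁
  have h2 : ⟪u, v₂⟫ = (0:ℝ) := by rw [real_inner_comm]; exact hu₂
  simp only [prj, inner_sub_right, real_inner_smul_right, h1, h2]
  ring

lemma step_lemma {KK : Set E3} (h0 : (0:E3) ∈ KK) (hbd : ∀ p ∈ KK, ‖p‖ ≤ 2)
    {v₁ v₂ : E3} (hv₁ : ‖v₁‖ = 1 ∨ v₁ = 0) (hv₂ : ‖v₂‖ = 1 ∨ v₂ = 0)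
    (hv₁₂ : ⟪v₁, v₂⟫ = 0) :
    ∃ (u : E3) (w : ℝ) (p₀ : E3), ‖u‖ = 1 ∧ ⟪v₁, u⟫ = 0 ∧ ⟪v₂, u⟫ = 0 ∧
      0 ≤ w ∧ p₀ ∈ KK ∧ prj v₁ v₂ p₀ = w • u ∧ ∀ p ∈ KK, ‖prj v₁ v₂ p‖ ≤ 2 * w := by
  have hv₁n : ‖v₁‖ ≤ 1 := by rcases hv₁ with h | h <;> simp [h]
  have hv₂n : ‖v₂‖ ≤ 1 := by rcases hv₂ with h | h <;> simp [h]
  have hbd6 : ∀ p ∈ KK, ‖prj v₁ v₂ p‖ ≤ 6 := by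
    intro p hp
    have h₁ : ‖⟪v₁, p⟫ • v₁‖ ≤ 2 := by
      rw [norm_smul, Real.norm_eq_abs]
      calc |⟪v₁, p⟫| * ‖v₁‖ ≤ (‖v₁‖ * ‖p‖) * ‖v₁‖ := by
            gcongr; exact abs_real_inner_le_norm v₁ p
        _ ≤ (1 * 2) * 1 := by
            have := hbd p hp
            gcongr <;> first | exact hv₁n | exact this | positivity
        _ = 2 := by ring
    have h₂ : ‖⟪v₂, p⟫ • v₂‖ ≤ 2 := by
      rw [norm_smul, Real.norm_eq_abs]
      calc |⟪v₂, p⟫| * ‖v₂‖ ≤ (‖v₂‖ * ‖p‖) * ‖v₂‖ := by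
            gcongr; exact abs_real_inner_le_norm v₂ p
        _ ≤ (1 * 2) * 1 := by
            have := hbd p hp
            gcongr <;> first | exact hv₂n | exact this | positivity
        _ = 2 := by ring
    calc ‖prj v₁ v₂ p‖ ≤ ‖p - ⟪v₁, p⟫ • v₁‖ + ‖⟪v₂, p⟫ • v₂‖ := norm_sub_le _ _
      _ ≤ (‖p‖ + ‖⟪v₁, p⟫ • v₁‖) + ‖⟪v₂, p⟫ • v₂‖ := by gcongr; exact norm_sub_le _ _
      _ ≤ (2 + 2) + 2 := by gcongr; exact hbd p hp
      _ = 6 := by ring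
  set Sset : Set ℝ := (fun p => ‖prj v₁ v₂ p‖) '' KK with hSset
  have hSne : Sset.Nonempty := ⟨‖prj v₁ v₂ 0‖, ⟨0, h0, rfl⟩⟩
  have hSbdd : BddAbove Sset := by
    refine ⟨6, ?_⟩
    rintro r ⟨p, hp, rfl⟩
    exact hbd6 p hp
  set s := sSup Sset with hs
  by_cases hsle : s ≤ 0
  · obtain ⟨u, hu, hu₁, hu₂⟩ := exists_unit_orth v₁ v₂
    refine ⟨u, 0, 0, hu, hu₁, hu₂, le_rfl, h0, ?_, ?_⟩
    · simp [prj]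
    · intro p hp
      have : ‖prj v₁ v₂ p‖ ≤ s := le_csSup hSbdd ⟨p, hp, rfl⟩
      calc ‖prj v₁ v₂ p‖ ≤ s := this
        _ ≤ 2 * 0 := by linarith
  · push_neg at hsle
    obtain ⟨r, hrS, hr⟩ := exists_lt_of_lt_csSup hSne (half_lt_self hsle)
    obtain ⟨p₀, hp₀, rfl⟩ := hrS
    set w := ‖prj v₁ v₂ p₀‖ with hw
    have hwpos : 0 < w := lt_of_le_of_lt (by positivity) hr
    have hwne : prj v₁ v₂ p₀ ≠ 0 := by
      intro h; rw [hw, h, norm_zero] at hwpos; exact lt_irrefl 0 hwpos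
    refine ⟨w⁻¹ • prj v₁ v₂ p₀, w, p₀, ?_, ?_, ?_, le_of_lt hwpos, hp₀, ?_, ?_⟩
    · rw [norm_smul, norm_inv, Real.norm_eq_abs, abs_of_pos hwpos, ← hw,
        inv_mul_cancel₀ (ne_of_gt hwpos)]
    · rw [real_inner_smul_right, (inner_prj_self hv₁ hv₂ hv₁₂ p₀).1, mul_zero]
    · rw [real_inner_smul_right, (inner_prj_self hv₁ hv₂ hv₁₂ p₀).2, mul_zero]
    · rw [smul_inv_smul₀ (ne_of_gt hwpos)]
    · intro p hp
      have h1 : ‖prj v₁ v₂ p‖ ≤ s := le_csSup hSbdd ⟨p, hp, rfl⟩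
      have h2 : s / 2 < w := hr
      linarith

lemma combo3 {K : Set E3} (hconv : Convex ℝ K) (h0 : (0:E3) ∈ K)
    (hsc : ∀ c : ℝ, |c| ≤ 1 → ∀ p ∈ K, c • p ∈ K)
    {a b c : ℝ} (h : |a| + |b| + |c| ≤ 1) {p₁ p₂ p₃ : E3}
    (hp₁ : p₁ ∈ K) (hp₂ : p₂ ∈ K) (hp₃ : p₃ ∈ K) :
    a • p₁ + b • p₂ + c • p₃ ∈ K := by
  have sgn : ∀ t : ℝ, ∃ s : ℝ, |s| ≤ 1 ∧ |t| * s = t := by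
    intro t
    rcases le_or_gt 0 t with ht | ht
    · exact ⟨1, by norm_num, by rw [abs_of_nonneg ht, mul_one]⟩
    · exact ⟨-1, by norm_num, by rw [abs_of_neg ht]; ring⟩
  obtain ⟨sa, hsa, hsa'⟩ := sgn a
  obtain ⟨sb, hsb, hsb'⟩ := sgn b
  obtain ⟨sc, hsc1, hsc2⟩ := sgn c
  set z : Fin 4 → E3 := ![sa • p₁, sb • p₂, sc • p₃, 0] with hz
  set f : Fin 4 → ℝ := ![|a|, |b|, |c|, 1 - (|a| + |b| + |c|)] with hf
  have habs : 0 ≤ |a| := abs_nonneg a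
  have hbabs : 0 ≤ |b| := abs_nonneg b
  have hcabs : 0 ≤ |c| := abs_nonneg c
  have hmem : ∀ l ∈ Finset.univ, z l ∈ K := by
    intro l _
    fin_cases l
    · exact hsc sa hsa p₁ hp₁
    · exact hsc sb hsb p₂ hp₂
    · exact hsc sc hsc1 p₃ hp₃
    · exact h0
  have hnn : ∀ l ∈ Finset.univ, 0 ≤ f l := by
    intro l _
    fin_cases l
    · exact habs
    · exact hbabs
    · exact hcabs
    · show (0:ℝ) ≤ 1 - (|a| + |b| + |c|); linarith
  have hsum : ∑ l, f l = 1 := by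
    simp [hf, Fin.sum_univ_four]
  have hres := hconv.sum_mem hnn hsum hmem
  have : ∑ l, f l • z l = a • p₁ + b • p₂ + c • p₃ := by
    simp only [hf, hz, Fin.sum_univ_four, Matrix.cons_val_zero, Matrix.cons_val_one,
      Matrix.head_cons, Matrix.cons_val_two, Matrix.tail_cons, Matrix.cons_val_three]
    rw [smul_zero, smul_smul, smul_smul, smul_smul, hsa', hsb', hsc2, add_zero]
  rwa [this] at hres

lemma select {ι : Type} [DecidableEq ι] (𝒜 : Finset ι) (K : ι → Set E3)
    (hconv : ∀ i ∈ 𝒜, Convex ℝ (K i)) (u : E3) (b : ℝ)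
    (hb : ∀ p : E3, (∀ i ∈ 𝒜, p ∈ K i) → ⟪u, p⟫ ≤ b) :
    ∃ I : Finset ι, I ⊆ 𝒜 ∧ I.card ≤ 4 ∧
      ∀ q : E3, (∀ i ∈ I, q ∈ K i) → ⟪u, q⟫ ≤ b := by
  classical
  rcases Finset.eq_empty_or_nonempty 𝒜 with h𝒜 | ⟨i₁, hi₁⟩
  · refine ⟨∅, Finset.empty_subset _, by simp, fun q _ => hb q ?_⟩
    intro i hi
    rw [h𝒜] at hi
    exact absurd hi (Finset.notMem_empty i)
  by_contra hcon
  push_neg at hcon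
  have hcon' : ∀ I : Finset ι, ∃ q : E3,
      (I ⊆ 𝒜 ∧ I.card ≤ 4) → ((∀ i ∈ I, q ∈ K i) ∧ b < ⟪u, q⟫) := by
    intro I
    by_cases h : I ⊆ 𝒜 ∧ I.card ≤ 4
    · obtain ⟨q, hq1, hq2⟩ := hcon I h.1 h.2
      exact ⟨q, fun _ => ⟨hq1, hq2⟩⟩
    · exact ⟨0, fun h' => absurd h' h⟩
  choose g hg using hcon'
  set 𝒯 : Finset (Finset ι) := 𝒜.powerset.filter (fun I => I.card ≤ 4) with h𝒯
  have h𝒯mem : ∀ I, I ∈ 𝒯 ↔ (I ⊆ 𝒜 ∧ I.card ≤ 4) := by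
    intro I
    simp [h𝒯, Finset.mem_filter, Finset.mem_powerset]
  have h𝒯ne : 𝒯.Nonempty := ⟨∅, (h𝒯mem ∅).mpr ⟨Finset.empty_subset _, by simp⟩⟩
  obtain ⟨I₀, hI₀𝒯, hImin⟩ := 𝒯.exists_min_image (fun I => ⟪u, g I⟫) h𝒯ne
  obtain ⟨hI₀𝒜, hI₀c⟩ := (h𝒯mem I₀).mp hI₀𝒯
  obtain ⟨hgI₀mem, hgI₀gt⟩ := hg I₀ ⟨hI₀𝒜, hI₀c⟩
  set β := ⟪u, g I₀⟫ with hβ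
  have hlin : IsLinearMap ℝ (fun p : E3 => ⟪u, p⟫) :=
    ⟨fun p q => inner_add_right u p q, fun c p => real_inner_smul_right u p c⟩
  have hne : (⋂ i ∈ 𝒜, (K i ∩ {p : E3 | β ≤ ⟪u, p⟫})).Nonempty := by
    apply Convex.helly_theorem' (𝕜 := ℝ)
    · intro i hi
      exact (hconv i hi).inter (convex_halfSpace_ge hlin β)
    · intro I hI hIcard
      have hIcard' : I.card ≤ 4 := by
        have : Module.finrank ℝ E3 = 3 := finrank_euclideanSpace_fin
        omega
    
      refine ⟨g I, ?_⟩
      have hmemI : I ∈ 𝒯 := (h𝒯mem I).mpr ⟨hI, hIcard'⟩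
      obtain ⟨hg1, _⟩ := hg I ⟨hI, hIcard'⟩
      apply Set.mem_biInter
      intro i hi
      exact ⟨hg1 i hi, hImin I hmemI⟩
  obtain ⟨p, hp⟩ := hne
  have hpall : ∀ i ∈ 𝒜, p ∈ K i ∩ {p : E3 | β ≤ ⟪u, p⟫} := by
    intro i hi
    exact Set.mem_iInter₂.mp hp i hi
  have h1 : ⟪u, p⟫ ≤ b := hb p (fun i hi => (hpall i hi).1)
  have h2 : β ≤ ⟪u, p⟫ := (hpall i₁ hi₁).2
  linarith

lemma scale_rep {w α : ℝ} {u r : E3} (hw : 0 ≤ w) (hr : w • u = r) (hα : |α| ≤ 2 * w) :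
    ∃ t : ℝ, |t| ≤ 2 ∧ α • u = t • r := by
  rcases eq_or_lt_of_le hw with h | h
  · have hα0 : α = 0 := by
      have h1 : |α| ≤ 0 := by rw [← h] at hα; linarith
      exact abs_eq_zero.mp (le_antisymm h1 (abs_nonneg α))
    exact ⟨0, by norm_num, by rw [hα0, zero_smul, zero_smul]⟩
  · refine ⟨α / w, ?_, ?_⟩
    · rw [abs_div, abs_of_pos h, div_le_iff₀ h]; linarith
    · rw [← hr, smul_smul, div_mul_cancel₀ _ (ne_of_gt h)]

lemma geom_main {ι : Type} [DecidableEq ι] (𝒜 : Finset ι) (i₀ : ι) (hi₀ : i₀ ∈ 𝒜)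
    (K : ι → Set E3)
    (hconv : ∀ i ∈ 𝒜, Convex ℝ (K i))
    (h0 : ∀ i ∈ 𝒜, (0:E3) ∈ K i)
    (hsc : ∀ i ∈ 𝒜, ∀ c : ℝ, |c| ≤ 1 → ∀ p ∈ K i, c • p ∈ K i)
    (hbd : ∀ i ∈ 𝒜, ∀ p ∈ K i, ‖p‖ ≤ 2) :
    ∃ T : Fin 12 → ι, (∀ m, T m ∈ 𝒜) ∧
      ∀ q : E3, (∀ m, q ∈ K (T m)) → ∀ i ∈ 𝒜, (54:ℝ)⁻¹ • q ∈ K i := by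
  classical
  set KK : Set E3 := ⋂ i ∈ 𝒜, K i with hKK
  have hmemKK : ∀ p : E3, p ∈ KK ↔ ∀ i ∈ 𝒜, p ∈ K i := fun p => Set.mem_iInter₂
  have hKK0 : (0:E3) ∈ KK := (hmemKK 0).mpr h0
  have hKKbd : ∀ p ∈ KK, ‖p‖ ≤ 2 := fun p hp => hbd i₀ hi₀ p ((hmemKK p).mp hp i₀ hi₀)
  have comboKK : ∀ {a b c : ℝ}, |a| + |b| + |c| ≤ 1 → ∀ {p₁ p₂ p₃ : E3},
      p₁ ∈ KK → p₂ ∈ KK → p₃ ∈ KK → a • p₁ + b • p₂ + c • p₃ ∈ KK := by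
    intro a b c h p₁ p₂ p₃ h₁ h₂ h₃
    exact (hmemKK _).mpr (fun i hi => combo3 (hconv i hi) (h0 i hi) (hsc i hi) h
      ((hmemKK p₁).mp h₁ i hi) ((hmemKK p₂).mp h₂ i hi) ((hmemKK p₃).mp h₃ i hi))
  -- step 1
  obtain ⟨u₁, w₁, p₁, hu₁n, _, _, hw₁nn, hp₁KK, hprj₁, hb₁⟩ :=
    step_lemma hKK0 hKKbd (v₁ := 0) (v₂ := 0) (Or.inr rfl) (Or.inr rfl) (inner_zero_left 0)
  rw [prj_zero_zero] at hprj₁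
  have hb₁' : ∀ p ∈ KK, ‖p‖ ≤ 2 * w₁ := by
    intro p hp
    have := hb₁ p hp
    rwa [prj_zero_zero] at this
  -- step 2
  obtain ⟨u₂, w₂, p₂, hu₂n, hu₁₂, _, hw₂nn, hp₂KK, hprj₂, hb₂⟩ :=
    step_lemma hKK0 hKKbd (v₁ := u₁) (v₂ := 0) (Or.inl hu₁n) (Or.inr rfl) (inner_zero_right u₁)
  -- step 3
  obtain ⟨u₃, w₃, p₃, hu₃n, hu₁₃, hu₂₃, hw₃nn, hp₃KK, hprj₃, hb₃⟩ :=
    step_lemma hKK0 hKKbd (v₁ := u₁) (v₂ := u₂) (Or.inl hu₁n) (Or.inl hu₂n) hu₁₂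
  -- upper bounds for inner products over KK
  have hub₁ : ∀ p : E3, (∀ i ∈ 𝒜, p ∈ K i) → ⟪u₁, p⟫ ≤ 2 * w₁ := by
    intro p hp
    have hpKK : p ∈ KK := (hmemKK p).mpr hp
    calc ⟪u₁, p⟫ ≤ ‖u₁‖ * ‖p‖ := real_inner_le_norm _ _
      _ = ‖p‖ := by rw [hu₁n, one_mul]
      _ ≤ 2 * w₁ := hb₁' p hpKK
  have hub₂ : ∀ p : E3, (∀ i ∈ 𝒜, p ∈ K i) → ⟪u₂, p⟫ ≤ 2 * w₂ := by
    intro p hp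
    have hpKK : p ∈ KK := (hmemKK p).mpr hp
    calc ⟪u₂, p⟫ = ⟪u₂, prj u₁ 0 p⟫ := inner_eq_inner_prj hu₁₂ (inner_zero_left u₂) p
      _ ≤ ‖u₂‖ * ‖prj u₁ 0 p‖ := real_inner_le_norm _ _
      _ = ‖prj u₁ 0 p‖ := by rw [hu₂n, one_mul]
      _ ≤ 2 * w₂ := hb₂ p hpKK
  have hub₃ : ∀ p : E3, (∀ i ∈ 𝒜, p ∈ K i) → ⟪u₃, p⟫ ≤ 2 * w₃ := by
    intro p hp
    have hpKK : p ∈ KK := (hmemKK p).mpr hp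
    calc ⟪u₃, p⟫ = ⟪u₃, prj u₁ u₂ p⟫ := inner_eq_inner_prj hu₁₃ hu₂₃ p
      _ ≤ ‖u₃‖ * ‖prj u₁ u₂ p‖ := real_inner_le_norm _ _
      _ = ‖prj u₁ u₂ p‖ := by rw [hu₃n, one_mul]
      _ ≤ 2 * w₃ := hb₃ p hpKK
  -- select three ≤4-subfamilies
  obtain ⟨I₁, hI₁𝒜, hI₁c, hI₁⟩ := select 𝒜 K hconv u₁ (2 * w₁) hub₁
  obtain ⟨I₂, hI₂𝒜, hI₂c, hI₂⟩ := select 𝒜 K hconv u₂ (2 * w₂) hub₂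
  obtain ⟨I₃, hI₃𝒜, hI₃c, hI₃⟩ := select 𝒜 K hconv u₃ (2 * w₃) hub₃
  -- package as 12 indices
  set L : List ι := I₁.toList ++ I₂.toList ++ I₃.toList with hLdef
  have hLlen : L.length ≤ 12 := by
    have e1 := I₁.length_toList
    have e2 := I₂.length_toList
    have e3 := I₃.length_toList
    simp only [hLdef, List.length_append]
    omega
  have hLmem𝒜 : ∀ i ∈ L, i ∈ 𝒜 := by
    intro i hi
    simp only [hLdef, List.mem_append, Finset.mem_toList] at hi
    rcases hi with (hi | hi) | hi
    · exact hI₁𝒜 hi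
    · exact hI₂𝒜 hi
    · exact hI₃𝒜 hi
  set T : Fin 12 → ι := fun m => L.getD (m : ℕ) i₀ with hT
  have hTmem : ∀ m : Fin 12, T m ∈ 𝒜 := by
    intro m
    by_cases h : (m : ℕ) < L.length
    · show L.getD (m : ℕ) i₀ ∈ 𝒜
      rw [List.getD_eq_getElem L i₀ h]
      exact hLmem𝒜 _ (List.getElem_mem h)
    · show L.getD (m : ℕ) i₀ ∈ 𝒜
      rw [List.getD_eq_default L i₀ (le_of_not_gt h)]
      exact hi₀
  have hcov : ∀ i ∈ L, ∃ m : Fin 12, T m = i := by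
    intro i hi
    obtain ⟨n, hn, hni⟩ := List.mem_iff_getElem.mp hi
    refine ⟨⟨n, lt_of_lt_of_le hn hLlen⟩, ?_⟩
    show L.getD ((⟨n, lt_of_lt_of_le hn hLlen⟩ : Fin 12) : ℕ) i₀ = i
    rw [List.getD_eq_getElem L i₀ hn]
    exact hni
  refine ⟨T, hTmem, ?_⟩
  intro q hq
  have hqsel : ∀ i ∈ L, q ∈ K i := by
    intro i hi
    obtain ⟨m, hm⟩ := hcov i hi
    rw [← hm]
    exact hq m
  have hqnegsel : ∀ i ∈ L, -q ∈ K i := by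
    intro i hi
    have h := hsc i (hLmem𝒜 i hi) (-1) (by norm_num) q (hqsel i hi)
    simpa using h
  have hmemL₁ : ∀ i ∈ I₁, i ∈ L := by
    intro i hi; simp only [hLdef, List.mem_append, Finset.mem_toList]; tauto
  have hmemL₂ : ∀ i ∈ I₂, i ∈ L := by
    intro i hi; simp only [hLdef, List.mem_append, Finset.mem_toList]; tauto
  have hmemL₃ : ∀ i ∈ I₃, i ∈ L := by
    intro i hi; simp only [hLdef, List.mem_append, Finset.mem_toList]; tauto
  have habs : ∀ (u : E3) (w : ℝ) (I : Finset ι), (∀ i ∈ I, i ∈ L) →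
      (∀ q' : E3, (∀ i ∈ I, q' ∈ K i) → ⟪u, q'⟫ ≤ 2 * w) → |⟪u, q⟫| ≤ 2 * w := by
    intro u w I hIL hsel
    have h1 : ⟪u, q⟫ ≤ 2 * w := hsel q (fun i hi => hqsel i (hIL i hi))
    have h2 : ⟪u, -q⟫ ≤ 2 * w := hsel (-q) (fun i hi => hqnegsel i (hIL i hi))
    rw [inner_neg_right] at h2
    exact abs_le.mpr ⟨by linarith, h1⟩
  have ha₁ : |⟪u₁, q⟫| ≤ 2 * w₁ := habs u₁ w₁ I₁ hmemL₁ hI₁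
  have ha₂ : |⟪u₂, q⟫| ≤ 2 * w₂ := habs u₂ w₂ I₂ hmemL₂ hI₂
  have ha₃ : |⟪u₃, q⟫| ≤ 2 * w₃ := habs u₃ w₃ I₃ hmemL₃ hI₃
  -- orthonormal expansion of q
  have hu₂₁ : ⟪u₂, u₁⟫ = 0 := by rw [real_inner_comm]; exact hu₁₂
  have hu₃₁ : ⟪u₃, u₁⟫ = 0 := by rw [real_inner_comm]; exact hu₁₃
  have hu₃₂ : ⟪u₃, u₂⟫ = 0 := by rw [real_inner_comm]; exact hu₂₃
  set U : Fin 3 → E3 := ![u₁, u₂, u₃] with hU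
  have hOrth : Orthonormal ℝ U := by
    constructor
    · intro i
      fin_cases i
      · exact hu₁n
      · exact hu₂n
      · exact hu₃n
    · intro i j hij
      fin_cases i <;> fin_cases j <;>
        first
          | exact absurd rfl hij
          | exact hu₁₂
          | exact hu₁₃
          | exact hu₂₃
          | exact hu₂₁
          | exact hu₃₁
          | exact hu₃₂
  have hspan : Submodule.span ℝ (Set.range U) = ⊤ :=
    hOrth.linearIndependent.span_eq_top_of_card_eq_finrank
      (by simp [finrank_euclideanSpace_fin])
  have hqspan : q ∈ Submodule.span ℝ (Set.range U) := by rw [hspan]; exact Submodule.mem_top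
  obtain ⟨cf, hcf⟩ := (Submodule.mem_span_range_iff_exists_fun ℝ).mp hqspan
  have hcoef : ∀ j : Fin 3, cf j = ⟪U j, q⟫ := by
    intro j
    rw [← hcf]
    exact (hOrth.inner_right_fintype cf j).symm
  have hqexp : q = ⟪u₁, q⟫ • u₁ + ⟪u₂, q⟫ • u₂ + ⟪u₃, q⟫ • u₃ := by
    have h1 := hcf
    rw [Fin.sum_univ_three] at h1
    rw [hcoef 0, hcoef 1, hcoef 2] at h1
    rw [show U 0 = u₁ from rfl, show U 1 = u₂ from rfl, show U 2 = u₃ from rfl] at h1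
    exact h1.symm
  -- lower bounds: the vectors w_j • u_j lie in 9 • KK
  have hz₁ : (9:ℝ)⁻¹ • (w₁ • u₁) ∈ KK := by
    rw [← hprj₁]
    have heq : (9:ℝ)⁻¹ • p₁ = (9:ℝ)⁻¹ • p₁ + (0:ℝ) • p₂ + (0:ℝ) • p₃ := by module
    rw [heq]
    refine comboKK ?_ hp₁KK hp₂KK hp₃KK
    rw [abs_zero, abs_of_nonneg (by norm_num : (0:ℝ) ≤ (9:ℝ)⁻¹)]
    norm_num
  have hip₂ : |⟪u₁, p₂⟫| ≤ 2 * w₁ := by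
    calc |⟪u₁, p₂⟫| ≤ ‖u₁‖ * ‖p₂‖ := abs_real_inner_le_norm _ _
      _ = ‖p₂‖ := by rw [hu₁n, one_mul]
      _ ≤ 2 * w₁ := hb₁' p₂ hp₂KK
  obtain ⟨t₂, ht₂, ht₂'⟩ := scale_rep hw₁nn hprj₁.symm hip₂
  have hr₂ : w₂ • u₂ = p₂ - t₂ • p₁ := by
    rw [← hprj₂]
    show p₂ - ⟪u₁, p₂⟫ • u₁ - ⟪(0:E3), p₂⟫ • (0:E3) = p₂ - t₂ • p₁
    rw [ht₂', inner_zero_left, zero_smul, sub_zero]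
  have hz₂ : (9:ℝ)⁻¹ • (w₂ • u₂) ∈ KK := by
    rw [hr₂]
    have heq : (9:ℝ)⁻¹ • (p₂ - t₂ • p₁) = (-(t₂/9)) • p₁ + (9:ℝ)⁻¹ • p₂ + (0:ℝ) • p₃ := by
      module
    rw [heq]
    refine comboKK ?_ hp₁KK hp₂KK hp₃KK
    have : |(-(t₂/9))| ≤ 2/9 := by
      rw [abs_neg, abs_div]
      rw [show |(9:ℝ)| = 9 by norm_num]
      linarith [div_le_div_of_nonneg_right (c := (9:ℝ)) ht₂ (by norm_num)]
    rw [show |(9:ℝ)⁻¹| = 9⁻¹ by norm_num, abs_zero]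
    norm_num at this ⊢
    linarith
  have hip₃ : |⟪u₁, p₃⟫| ≤ 2 * w₁ := by
    calc |⟪u₁, p₃⟫| ≤ ‖u₁‖ * ‖p₃‖ := abs_real_inner_le_norm _ _
      _ = ‖p₃‖ := by rw [hu₁n, one_mul]
      _ ≤ 2 * w₁ := hb₁' p₃ hp₃KK
  obtain ⟨t₃, ht₃, ht₃'⟩ := scale_rep hw₁nn hprj₁.symm hip₃
  have hip₃' : |⟪u₂, p₃⟫| ≤ 2 * w₂ := by
    rw [inner_eq_inner_prj hu₁₂ (inner_zero_left u₂) p₃]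
    calc |⟪u₂, prj u₁ 0 p₃⟫| ≤ ‖u₂‖ * ‖prj u₁ 0 p₃‖ := abs_real_inner_le_norm _ _
      _ = ‖prj u₁ 0 p₃‖ := by rw [hu₂n, one_mul]
      _ ≤ 2 * w₂ := hb₂ p₃ hp₃KK
  obtain ⟨t₄, ht₄, ht₄'⟩ := scale_rep hw₂nn hr₂ hip₃'
  have hr₃ : w₃ • u₃ = p₃ - t₃ • p₁ - t₄ • (p₂ - t₂ • p₁) := by
    rw [← hprj₃]
    show p₃ - ⟪u₁, p₃⟫ • u₁ - ⟪u₂, p₃⟫ • u₂ = p₃ - t₃ • p₁ - t₄ • (p₂ - t₂ • p₁)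
    rw [ht₃', ht₄']
  have hz₃ : (9:ℝ)⁻¹ • (w₃ • u₃) ∈ KK := by
    rw [hr₃]
    have heq : (9:ℝ)⁻¹ • (p₃ - t₃ • p₁ - t₄ • (p₂ - t₂ • p₁))
        = ((t₄ * t₂ - t₃)/9) • p₁ + (-(t₄/9)) • p₂ + (9:ℝ)⁻¹ • p₃ := by
      module
    rw [heq]
    refine comboKK ?_ hp₁KK hp₂KK hp₃KK
    have h1 : |t₄ * t₂ - t₃| ≤ 6 := by
      calc |t₄ * t₂ - t₃| ≤ |t₄ * t₂| + |t₃| := abs_sub _ _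
        _ = |t₄| * |t₂| + |t₃| := by rw [abs_mul]
        _ ≤ 2 * 2 + 2 := by
            have := abs_nonneg t₂
            have := abs_nonneg t₄
            nlinarith
        _ = 6 := by norm_num
    have h2 : |(t₄ * t₂ - t₃)/9| ≤ 6/9 := by
      rw [abs_div, show |(9:ℝ)| = 9 by norm_num]
      linarith [div_le_div_of_nonneg_right (c := (9:ℝ)) h1 (by norm_num)]
    have h3 : |(-(t₄/9))| ≤ 2/9 := by
      rw [abs_neg, abs_div, show |(9:ℝ)| = 9 by norm_num]
      linarith [div_le_div_of_nonneg_right (c := (9:ℝ)) ht₄ (by norm_num)]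
    rw [show |(9:ℝ)⁻¹| = 9⁻¹ by norm_num]
    norm_num at h2 h3 ⊢
    linarith
  -- final combination
  obtain ⟨c₁, hc₁, hc₁'⟩ := scale_rep hw₁nn rfl ha₁
  obtain ⟨c₂, hc₂, hc₂'⟩ := scale_rep hw₂nn rfl ha₂
  obtain ⟨c₃, hc₃, hc₃'⟩ := scale_rep hw₃nn rfl ha₃
  have hfinal : (54:ℝ)⁻¹ • q
      = (c₁/6) • ((9:ℝ)⁻¹ • (w₁ • u₁)) + (c₂/6) • ((9:ℝ)⁻¹ • (w₂ • u₂))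
        + (c₃/6) • ((9:ℝ)⁻¹ • (w₃ • u₃)) := by
    rw [hqexp, hc₁', hc₂', hc₃']
    module
  intro i hi
  rw [hfinal]
  refine (hmemKK _).mp (comboKK ?_ hz₁ hz₂ hz₃) i hi
  have e1 : |c₁/6| ≤ 2/6 := by
    rw [abs_div, show |(6:ℝ)| = 6 by norm_num]
    linarith [div_le_div_of_nonneg_right (c := (6:ℝ)) hc₁ (by norm_num)]
  have e2 : |c₂/6| ≤ 2/6 := by
    rw [abs_div, show |(6:ℝ)| = 6 by norm_num]
    linarith [div_le_div_of_nonneg_right (c := (6:ℝ)) hc₂ (by norm_num)]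
  have e3 : |c₃/6| ≤ 2/6 := by
    rw [abs_div, show |(6:ℝ)| = 6 by norm_num]
    linarith [div_le_div_of_nonneg_right (c := (6:ℝ)) hc₃ (by norm_num)]
  linarith

lemma v2_decomp (v : V2) :
    v = v 0 • EuclideanSpace.single (0:Fin 2) (1:ℝ) + v 1 • EuclideanSpace.single 1 1 := by
  ext i; fin_cases i <;> simp [EuclideanSpace.single_apply]

lemma jet_eq (x : V2) (F : V2 → ℝ) :
    jet x F = fun y => F x + ((y - x) 0 * pd 0 F x + (y - x) 1 * pd 1 F x) := by
  funext y
  show F x + fderiv ℝ F x (y - x) = _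
  rw [show (y - x) = (y-x) 0 • EuclideanSpace.single (0:Fin 2) (1:ℝ)
      + (y-x) 1 • EuclideanSpace.single 1 1 from v2_decomp _]
  simp [pd]

/-- The affine function on `V2` with data `v ∈ E3`. -/
noncomputable def Aff (x : V2) (v : E3) : V2 → ℝ :=
  fun y => v 0 + (y - x) 0 * v 1 + (y - x) 1 * v 2

noncomputable def mk3 (a b c : ℝ) : E3 := (WithLp.equiv 2 (Fin 3 → ℝ)).symm ![a, b, c]

lemma pd_zero_fun (i : Fin 2) : pd i (fun _ => (0:ℝ)) = fun _ => (0:ℝ) := by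
  funext z
  simp [pd]

lemma zero_mem_sigma (x : V2) (S : Finset V2) : (fun _ => (0:ℝ)) ∈ sigmaSet x S := by
  refine ⟨fun _ => 0, contDiff_const, fun _ _ => rfl, ?_, ?_⟩
  · intro z
    have h : c2SqAt (fun _ => (0:ℝ)) z = 0 := by
      simp [c2SqAt, pd_zero_fun, pd]
    rw [h, Real.sqrt_zero]
    norm_num
  · funext y
    simp [jet]

lemma Aff_zero (x : V2) : Aff x 0 = fun _ => (0:ℝ) := by
  funext y
  simp [Aff]

lemma c2_bounds {F : V2 → ℝ} (hFn : C2NormLE F 1) (z : V2) :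
    |F z| ≤ 1 ∧ |pd 0 F z| ≤ 1 ∧ |pd 1 F z| ≤ 1 := by
  have h := hFn z
  have hnn : 0 ≤ c2SqAt F z := by unfold c2SqAt; positivity
  have h1 : c2SqAt F z ≤ 1 := by
    nlinarith [Real.sq_sqrt hnn, Real.sqrt_nonneg (c2SqAt F z)]
  unfold c2SqAt at h1
  refine ⟨?_, ?_, ?_⟩ <;> rw [← sq_le_one_iff_abs_le_one] <;>
    nlinarith [sq_nonneg (F z), sq_nonneg (pd 0 F z), sq_nonneg (pd 1 F z),
      sq_nonneg (pd 0 (pd 0 F) z), sq_nonneg (pd 0 (pd 1 F) z), sq_nonneg (pd 1 (pd 1 F) z)]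

lemma sigma_rep {x : V2} {S : Finset V2} {P : V2 → ℝ} (hP : P ∈ sigmaSet x S) :
    ∃ v : E3, P = Aff x v ∧ ‖v‖ ≤ 2 := by
  obtain ⟨F, hF2, hFS, hFn, hFj⟩ := hP
  refine ⟨mk3 (F x) (pd 0 F x) (pd 1 F x), ?_, ?_⟩
  · rw [← hFj, jet_eq]
    funext y
    simp only [Aff, mk3, WithLp.equiv_symm_apply, PiLp.toLp_apply]
    norm_num [Matrix.cons_val_zero, Matrix.cons_val_one, Matrix.head_cons, Matrix.cons_val_two, Matrix.tail_cons]
    ring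
  · obtain ⟨e1, e2, e3⟩ := c2_bounds hFn x
    rw [EuclideanSpace.norm_eq]
    have : Real.sqrt 4 = 2 := by
      rw [show (4:ℝ) = 2^2 by norm_num, Real.sqrt_sq (by norm_num)]
    rw [← this]
    apply Real.sqrt_le_sqrt
    rw [Fin.sum_univ_three]
    simp only [mk3, WithLp.equiv_symm_apply, PiLp.toLp_apply, Matrix.cons_val_zero, Matrix.cons_val_one,
      Matrix.head_cons, Matrix.cons_val_two, Matrix.tail_cons, Real.norm_eq_abs, sq_abs]
    nlinarith [abs_nonneg (F x), abs_nonneg (pd 0 F x), abs_nonneg (pd 1 F x),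
      sq_abs (F x), sq_abs (pd 0 F x), sq_abs (pd 1 F x)]

lemma Aff_combo (x : V2) (a b c : ℝ) (v₁ v₂ v₃ : E3) :
    Aff x (a • v₁ + b • v₂ + c • v₃)
      = fun y => a * Aff x v₁ y + b * Aff x v₂ y + c * Aff x v₃ y := by
  funext y
  simp only [Aff, PiLp.add_apply, PiLp.smul_apply, smul_eq_mul]
  ring

lemma Aff_inj {x : V2} {v v' : E3} (h : Aff x v = Aff x v') : v = v' := by
  have h0 := congrFun h x
  have h1 := congrFun h (x + EuclideanSpace.single (0:Fin 2) (1:ℝ))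
  have h2 := congrFun h (x + EuclideanSpace.single (1:Fin 2) (1:ℝ))
  simp only [Aff, sub_self, add_sub_cancel_left] at h0 h1 h2
  have hz : ∀ i : Fin 2, (0:V2) i = 0 := fun i => rfl
  rw [hz 0, hz 1] at h0
  have hs00 : (EuclideanSpace.single (0:Fin 2) (1:ℝ)) 0 = 1 := by
    simp [EuclideanSpace.single_apply]
  have hs01 : (EuclideanSpace.single (0:Fin 2) (1:ℝ)) 1 = 0 := by
    simp [EuclideanSpace.single_apply]
  have hs10 : (EuclideanSpace.single (1:Fin 2) (1:ℝ)) 0 = 0 := by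
    simp [EuclideanSpace.single_apply]
  have hs11 : (EuclideanSpace.single (1:Fin 2) (1:ℝ)) 1 = 1 := by
    simp [EuclideanSpace.single_apply]
  rw [hs00, hs01] at h1
  rw [hs10, hs11] at h2
  have e0 : v 0 = v' 0 := by linarith
  have e1 : v 1 = v' 1 := by linarith
  have e2 : v 2 = v' 2 := by linarith
  ext i
  fin_cases i
  · exact e0
  · exact e1
  · exact e2
/-- **Lemma 4.5.** There is a universal constant `C` such that for every finite `E ⊆ ℝ²`,
every `x ∈ ℝ²`, and every `k`, there are twelve subsets `S 0, …, S 11 ⊆ E`, each of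
cardinality at most `k`, with `⋂ᵢ σ(x, Sᵢ) ⊆ C · σ^♯(x, k)`. -/
theorem sigmaSharp_helly_selection :
    ∃ C : ℝ, 0 < C ∧
      ∀ (E : Finset V2) (x : V2) (k : ℕ),
        ∃ S : Fin 12 → Finset V2,
          (∀ i : Fin 12, S i ⊆ E ∧ (S i).card ≤ k) ∧
          ∀ P : V2 → ℝ, (∀ i : Fin 12, P ∈ sigmaSet x (S i)) →
            ∃ Q ∈ sigmaSharp E x k, P = C • Q := by
  refine ⟨54, by norm_num, ?_⟩
  intro E x k
  classical
  set 𝒜 : Finset (Finset V2) := E.powerset.filter (fun S => S.card ≤ k) with h𝒜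
  have h𝒜mem : ∀ S : Finset V2, S ∈ 𝒜 ↔ (S ⊆ E ∧ S.card ≤ k) := by
    intro S; simp [h𝒜, Finset.mem_filter, Finset.mem_powerset]
  have hi₀ : (∅ : Finset V2) ∈ 𝒜 := (h𝒜mem ∅).mpr ⟨Finset.empty_subset _, by simp⟩
  set K : Finset V2 → Set E3 := fun S => {v : E3 | Aff x v ∈ sigmaSet x S} with hK
  have hKcombo : ∀ S : Finset V2, ∀ a b c : ℝ, |a| + |b| + |c| ≤ 1 →
      ∀ v₁ ∈ K S, ∀ v₂ ∈ K S, ∀ v₃ ∈ K S, a • v₁ + b • v₂ + c • v₃ ∈ K S := by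
    intro S a b c habc v₁ h₁ v₂ h₂ v₃ h₃
    show Aff x (a • v₁ + b • v₂ + c • v₃) ∈ sigmaSet x S
    rw [Aff_combo]
    exact sigma_combo h₁ h₂ h₃ habc
  have hK0 : ∀ S : Finset V2, (0:E3) ∈ K S := by
    intro S
    show Aff x 0 ∈ sigmaSet x S
    rw [Aff_zero]
    exact zero_mem_sigma x S
  have hKconv : ∀ S ∈ 𝒜, Convex ℝ (K S) := by
    intro S _ v₁ h₁ v₂ h₂ a b ha hb hab
    have h := hKcombo S a b 0
      (by rw [abs_of_nonneg ha, abs_of_nonneg hb, abs_zero]; linarith)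
      v₁ h₁ v₂ h₂ 0 (hK0 S)
    simpa using h
  have hKsc : ∀ S ∈ 𝒜, ∀ c : ℝ, |c| ≤ 1 → ∀ v ∈ K S, c • v ∈ K S := by
    intro S _ c hc v hv
    have h := hKcombo S c 0 0 (by simpa using hc) v hv 0 (hK0 S) 0 (hK0 S)
    simpa using h
  have hKbd : ∀ S ∈ 𝒜, ∀ v ∈ K S, ‖v‖ ≤ 2 := by
    intro S _ v hv
    obtain ⟨v', hv', hb⟩ := sigma_rep hv
    rwa [Aff_inj hv']
  obtain ⟨T, hT𝒜, hTmain⟩ := geom_main 𝒜 ∅ hi₀ K hKconv (fun S _ => hK0 S) hKsc hKbd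
  refine ⟨T, fun m => ⟨((h𝒜mem _).mp (hT𝒜 m)).1, ((h𝒜mem _).mp (hT𝒜 m)).2⟩, ?_⟩
  intro P hP
  obtain ⟨v, hPv, _⟩ := sigma_rep (hP 0)
  have hvmem : ∀ m : Fin 12, v ∈ K (T m) := by
    intro m
    show Aff x v ∈ sigmaSet x (T m)
    rw [← hPv]
    exact hP m
  have hkey := hTmain v hvmem
  refine ⟨Aff x ((54:ℝ)⁻¹ • v), ?_, ?_⟩
  · intro S hSE hSk
    exact hkey S ((h𝒜mem S).mpr ⟨hSE, hSk⟩)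
  · funext y
    rw [hPv]
    show Aff x v y = (54:ℝ) • (Aff x ((54:ℝ)⁻¹ • v) y)
    simp only [Aff, PiLp.smul_apply, smul_eq_mul]
    have h54 : (54:ℝ) ≠ 0 := by norm_num
    field_simp
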